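/- Let A, B be strings of lengths m and n and σ a character. Then for all 0 ≤ i ≤ n and 0 ≤ j ≤ m: LCS(B[i..n], σ·A[0..j]) = max( LCS(B[i..n], A[0..j]), LCS(B[k..n], A[0..j]) + 1 ) if k = nextmatch(i,σ,B) < ∞, and LCS(B[i..n], σ·A[0..j]) = LCS(B[i..n], A[0..j]) if nextmatch(i,σ,B) = ∞. Here σ·A[0..j] denotes the string A[0..j] with σ prepended. -/

import Mathlib

variable {α : Type*}

/-- LCS of two lists: the maximum length of a common sublist. -/
noncomputable def LCS (X Y : List α) : ℕ :=
  sSup {k | ∃ Z : List α, Z.length = k ∧ Z.Sublist X ∧ Z.Sublist Y}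

/-- `substr S i j` is S[i..j]: the characters of S at (1-based) positions i+1,…,j. -/
def substr (S : List α) (i j : ℕ) : List α := (S.take j).drop i

/-- The density matrix D□ of a matrix D. -/
def density (D : ℕ → ℕ → ℤ) (i j : ℕ) : ℤ :=
  D i j + D (i - 1) (j - 1) - D (i - 1) j - D i (j - 1)

/-- The all scores matrix K of A and B: K[i,j] = LCS(B[i..j], A) if i ≤ j, else j - i. -/
noncomputable def Kmat (A B : List α) (i j : ℕ) : ℤ :=
  if i ≤ j then (LCS (substr B i j) A : ℤ) else (j : ℤ) - (i : ℤ)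

/-- The all scores matrix P of A and B: P[i,j] = LCS(B[i..n], A[0..j]). -/
noncomputable def Pmat (A B : List α) (i j : ℕ) : ℤ :=
  (LCS (substr B i B.length) (substr A 0 j) : ℤ)

/-- nextmatch(i,σ,B): minimum (1-based) position i' with i < i' ≤ |B| and B[i'] = σ; ⊤ (∞) if none. -/
noncomputable def nextmatch (i : ℕ) (σ : α) (B : List α) : ℕ∞ :=
  sInf {k : ℕ∞ | ∃ k' : ℕ, k = (k' : ℕ∞) ∧ i < k' ∧ k' ≤ B.length ∧ B[k' - 1]? = some σ}

/-- prevmatch(j,σ,B): maximum (1-based) position i' with 1 ≤ i' ≤ j and B[i'] = σ; ⊥ (−∞) if none. -/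
noncomputable def prevmatch (j : ℕ) (σ : α) (B : List α) : WithBot ℕ :=
  sSup {k : WithBot ℕ | ∃ k' : ℕ, k = (k' : WithBot ℕ) ∧ 1 ≤ k' ∧ k' ≤ j ∧ B[k' - 1]? = some σ}

lemma LCS_bdd (X Y : List α) :
    BddAbove {k | ∃ Z : List α, Z.length = k ∧ Z.Sublist X ∧ Z.Sublist Y} :=
  ⟨X.length, fun _ ⟨_, hZ, hX, _⟩ => hZ ▸ hX.length_le⟩

lemma LCS_ne (X Y : List α) :
    {k | ∃ Z : List α, Z.length = k ∧ Z.Sublist X ∧ Z.Sublist Y}.Nonempty :=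
  ⟨0, [], rfl, List.nil_sublist _, List.nil_sublist _⟩

lemma length_le_LCS {Z X Y : List α} (h1 : Z.Sublist X) (h2 : Z.Sublist Y) :
    Z.length ≤ LCS X Y :=
  le_csSup (LCS_bdd X Y) ⟨Z, rfl, h1, h2⟩

lemma exists_LCS (X Y : List α) :
    ∃ Z : List α, Z.length = LCS X Y ∧ Z.Sublist X ∧ Z.Sublist Y :=
  Nat.sSup_mem (LCS_ne X Y) (LCS_bdd X Y)

/-- If `a :: l <+ X` and `a` does not occur among the first `t` entries of `X`,
then `l <+ X.drop (t+1)`. -/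
lemma tail_sublist_drop {a : α} :
    ∀ (X : List α) (l : List α) (t : ℕ), (a :: l).Sublist X →
      (∀ s, s < t → X[s]? ≠ some a) → l.Sublist (X.drop (t + 1))
  | [], l, t, h, _ => by simp at h
  | x :: X, l, 0, h, _ => by
      cases h with
      | cons _ h => exact ((List.sublist_cons_self a l).trans h)
      | cons_cons _ h => exact h
  | x :: X, l, t + 1, h, hno => by
      have hxa : x ≠ a := by
        intro hxa
        exact hno 0 (Nat.succ_pos t) (by simp [hxa])
      cases h with
      | cons _ h =>
          have := tail_sublist_drop X l t h (fun s hs => hno (s + 1) (by omega) ∘ by simp)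
          simpa using this
      | cons_cons _ h => exact absurd rfl hxa


lemma nextmatch_le {i k' : ℕ} {σ : α} {B : List α} (h1 : i < k') (h2 : k' ≤ B.length)
    (h3 : B[k' - 1]? = some σ) : nextmatch i σ B ≤ (k' : ℕ∞) :=
  sInf_le ⟨k', rfl, h1, h2, h3⟩

/-- effect of prepending σ to A[0..j] on LCS with suffixes of B. -/
theorem stmt_12 {α : Type*} (A B : List α) (m n : ℕ)
    (hA : A.length = m) (hB : B.length = n) (σ : α) :
    ∀ i ≤ n, ∀ j ≤ m,
      (∀ k : ℕ, nextmatch i σ B = (k : ℕ∞) →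
        LCS (substr B i n) (σ :: substr A 0 j) =
          max (LCS (substr B i n) (substr A 0 j))
              (LCS (substr B k n) (substr A 0 j) + 1)) ∧
      (nextmatch i σ B = ⊤ →
        LCS (substr B i n) (σ :: substr A 0 j) =
          LCS (substr B i n) (substr A 0 j)) := by
  subst hA hB
  intro i hi j hj
  have hsub : ∀ l : ℕ, substr B l B.length = B.drop l := by
    intro l; simp [substr]
  have hsubA : substr A 0 j = A.take j := by simp [substr]
  rw [hsub i, hsubA]
  constructor
  · -- finite nextmatch
    intro k hk
    rw [hsub k]
    -- extract membership of k in the defining set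
    have hmem : ∃ k' : ℕ, (k : ℕ∞) = (k' : ℕ∞) ∧ i < k' ∧ k' ≤ B.length ∧
        B[k' - 1]? = some σ := by
      have hlt : nextmatch i σ B < (k : ℕ∞) + 1 := by
        rw [hk]
        exact_mod_cast Nat.lt_succ_self k
      obtain ⟨a, ha, halt⟩ := sInf_lt_iff.mp hlt
      obtain ⟨k', hk', h1, h2, h3⟩ := ha
      refine ⟨k', ?_, h1, h2, h3⟩
      have hle : (k : ℕ∞) ≤ (k' : ℕ∞) := hk ▸ nextmatch_le h1 h2 h3
      subst hk'
      have hkk : k ≤ k' := by exact_mod_cast hle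
      have hkk2 : k' < k + 1 := by exact_mod_cast halt
      congr 1
      omega
    obtain ⟨k', hkk', hik, hkn, hkσ⟩ := hmem
    have hkeq : k = k' := by exact_mod_cast hkk'
    subst hkeq
    have hmin : ∀ k'' : ℕ, i < k'' → k'' ≤ B.length → B[k'' - 1]? = some σ → k ≤ k'' := by
      intro k'' h1 h2 h3
      have := hk ▸ nextmatch_le h1 h2 h3
      exact_mod_cast this
    obtain ⟨hk1, hgetk⟩ := List.getElem?_eq_some_iff.mp hkσ
    have hd : B.drop (k - 1) = σ :: B.drop k := by
      have hke : k - 1 + 1 = k := by omega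
      rw [List.drop_eq_getElem_cons hk1, hgetk, hke]
    have hsl : (σ :: B.drop k).Sublist (B.drop i) := by
      rw [← hd]
      have : B.drop (k - 1) = (B.drop i).drop (k - 1 - i) := by
        rw [List.drop_drop]
        congr 1
        omega
      rw [this]
      exact List.drop_sublist _ _
    apply le_antisymm
    · obtain ⟨Z, hZl, hZB, hZA⟩ := exists_LCS (B.drop i) (σ :: A.take j)
      rw [← hZl]
      cases hZA with
      | cons _ h => exact le_max_of_le_left (length_le_LCS hZB h)
      | cons_cons _ h =>
          rename_i Z'
          apply le_max_of_le_right
          have hno : ∀ s, s < k - 1 - i → (B.drop i)[s]? ≠ some σ := by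
            intro s hs hcon
            rw [List.getElem?_drop] at hcon
            obtain ⟨hlen, _⟩ := List.getElem?_eq_some_iff.mp hcon
            have := hmin (i + s + 1) (by omega) (by omega) (by simpa using hcon)
            omega
          have hZ' : Z'.Sublist (B.drop k) := by
            have := tail_sublist_drop (B.drop i) Z' (k - 1 - i) hZB hno
            rw [List.drop_drop] at this
            have heq : i + (k - 1 - i + 1) = k := by omega
            rwa [heq] at this
          simpa using Nat.add_le_add_right (length_le_LCS hZ' h) 1
    · apply max_le
      · obtain ⟨Z, hZl, hZB, hZA⟩ := exists_LCS (B.drop i) (A.take j)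
        rw [← hZl]
        exact length_le_LCS hZB (hZA.cons σ)
      · obtain ⟨Z, hZl, hZB, hZA⟩ := exists_LCS (B.drop k) (A.take j)
        have : (σ :: Z).Sublist (B.drop i) := (hZB.cons₂ σ).trans hsl
        have hle := length_le_LCS this (hZA.cons₂ σ)
        simp only [List.length_cons, hZl] at hle
        exact hle
  · -- nextmatch = ⊤
    intro htop
    have hempty : ∀ k' : ℕ, i < k' → k' ≤ B.length → B[k' - 1]? ≠ some σ := by
      intro k' h1 h2 h3
      have := htop ▸ nextmatch_le h1 h2 h3
      exact absurd (top_le_iff.mp this) (by simp)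
    apply le_antisymm
    · obtain ⟨Z, hZl, hZB, hZA⟩ := exists_LCS (B.drop i) (σ :: A.take j)
      rw [← hZl]
      cases hZA with
      | cons _ h => exact length_le_LCS hZB h
      | cons_cons _ h =>
          exfalso
          have hmem : σ ∈ B.drop i := hZB.subset (List.mem_cons_self)
          obtain ⟨t, ht, hget⟩ := List.mem_iff_getElem.mp hmem
          have hlen : t < B.length - i := by simpa using ht
          have : B[i + t]? = some σ := by
            rw [← List.getElem?_drop]
            exact List.getElem?_eq_some_iff.mpr ⟨ht, hget⟩
          exact hempty (i + t + 1) (by omega) (by omega) (by simpa using this) 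
    · obtain ⟨Z, hZl, hZB, hZA⟩ := exists_LCS (B.drop i) (A.take j)
      rw [← hZl]
      exact length_le_LCS hZB (hZA.cons σ)
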